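/- Let n ≥ 1 and let V : ℝⁿ → ℝ be continuous. For φ ∈ C_c^∞(ℝⁿ;ℂ) set q(φ) = ∫_{ℝⁿ}(‖∇φ(x)‖² + V(x)|φ(x)|²)dx, let E = inf{q(φ) : φ ∈ C_c^∞(ℝⁿ;ℂ), ‖φ‖₂ = 1}, and for R > 0 let Σ_R = inf{q(φ) : φ ∈ C_c^∞(ℝⁿ;ℂ), ‖φ‖₂ = 1, φ(x) = 0 whenever |x| < R}. Assume E > −∞. Let j₁, j₂ : ℝ → ℝ be smooth with j₁(t)² + j₂(t)² = 1 for all t, j₁(t) = 1 for t ≤ 1, j₁(t) = 0 for t ≥ 2, and j₂(t) = 0 for t ≤ 1, and set c = sup_t j₁′(t)² + sup_t j₂′(t)². Then for every R > 0 with Σ_R ≥ E and every φ ∈ C_c^∞(ℝⁿ;ℂ) with ‖φ‖₂ = 1, one has q(φ) + (Σ_R − E)·∫_{|x| ≤ 2R}|φ(x)|² dx ≥ Σ_R − c/R². -/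

import Mathlib

open MeasureTheory

/-- The gradient of a complex-valued function `u : ℝⁿ → ℂ` at a point `x`. -/
noncomputable def gradC {n : ℕ} (u : EuclideanSpace ℝ (Fin n) → ℂ)
    (x : EuclideanSpace ℝ (Fin n)) : EuclideanSpace ℂ (Fin n) :=
  (WithLp.equiv 2 (Fin n → ℂ)).symm fun i => fderiv ℝ u x (EuclideanSpace.single i 1)

/-- The quadratic form `q(φ) = ∫ (‖∇φ‖² + V |φ|²)` of the Schrödinger
operator `−Δ + V`. -/
noncomputable def qform {n : ℕ} (V : EuclideanSpace ℝ (Fin n) → ℝ)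
    (φ : EuclideanSpace ℝ (Fin n) → ℂ) : ℝ :=
  ∫ x, (‖gradC φ x‖ ^ 2 + V x * ‖φ x‖ ^ 2)

/-- The set of energies `q(φ)` of normalized test functions `φ ∈ C_c^∞`. -/
def energySet {n : ℕ} (V : EuclideanSpace ℝ (Fin n) → ℝ) : Set ℝ :=
  {e | ∃ φ : EuclideanSpace ℝ (Fin n) → ℂ, ContDiff ℝ (⊤ : ℕ∞) φ ∧
    HasCompactSupport φ ∧ (∫ x, ‖φ x‖ ^ 2) = 1 ∧ e = qform V φ}

/-- The set of energies `q(φ)` of normalized test functions supported in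
`{|x| ≥ R}`. -/
def energySetOutside {n : ℕ} (V : EuclideanSpace ℝ (Fin n) → ℝ) (R : ℝ) : Set ℝ :=
  {e | ∃ φ : EuclideanSpace ℝ (Fin n) → ℂ, ContDiff ℝ (⊤ : ℕ∞) φ ∧
    HasCompactSupport φ ∧ (∫ x, ‖φ x‖ ^ 2) = 1 ∧
    (∀ x, ‖x‖ < R → φ x = 0) ∧ e = qform V φ}

lemma gradC_norm_sq {n : ℕ} (u : EuclideanSpace ℝ (Fin n) → ℂ) (x : EuclideanSpace ℝ (Fin n)) :
    ‖gradC u x‖ ^ 2 = ∑ i, ‖fderiv ℝ u x (EuclideanSpace.single i 1)‖ ^ 2 := by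
  rw [EuclideanSpace.norm_eq, Real.sq_sqrt (by positivity)]
  rfl

lemma complex_key (p q a b : ℝ) (z d : ℂ) (h1 : p^2+q^2=1) (h2 : p*a+q*b=0) :
    ‖(a:ℂ)*z + (p:ℂ)*d‖^2 + ‖(b:ℂ)*z + (q:ℂ)*d‖^2 = ‖d‖^2 + (a^2+b^2)*‖z‖^2 := by
  have hw : ∀ w : ℂ, ‖w‖^2 = w.re^2 + w.im^2 := by
    intro w
    rw [Complex.sq_norm, Complex.normSq_apply]; ring
  simp only [hw, Complex.add_re, Complex.add_im, Complex.mul_re, Complex.mul_im,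
    Complex.ofReal_re, Complex.ofReal_im]
  linear_combination (d.re^2 + d.im^2) * h1 + (2*z.re*d.re + 2*z.im*d.im) * h2


lemma hasFDerivAt_norm' {n : ℕ} (x : EuclideanSpace ℝ (Fin n)) (hx : x ≠ 0) :
    HasFDerivAt (fun y : EuclideanSpace ℝ (Fin n) => ‖y‖) (‖x‖⁻¹ • innerSL ℝ x) x := by
  have h1 : HasFDerivAt (fun y : EuclideanSpace ℝ (Fin n) => ‖y‖^2) (2 • innerSL ℝ x) x :=
    (hasStrictFDerivAt_norm_sq x).hasFDerivAt
  have hne : ‖x‖^2 ≠ 0 := pow_ne_zero 2 (norm_ne_zero_iff.mpr hx)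
  have h2 := h1.sqrt hne
  have h3 : (fun y : EuclideanSpace ℝ (Fin n) => Real.sqrt (‖y‖^2)) = fun y => ‖y‖ := by
    funext y; exact Real.sqrt_sq (norm_nonneg y)
  rw [h3] at h2
  have hx0 : ‖x‖ ≠ 0 := norm_ne_zero_iff.mpr hx
  have he : ((1 / (2 * Real.sqrt (‖x‖ ^ 2))) • 2 • innerSL ℝ x :
      EuclideanSpace ℝ (Fin n) →L[ℝ] ℝ) = ‖x‖⁻¹ • innerSL ℝ x := by
    ext y
    simp only [ContinuousLinearMap.smul_apply, ContinuousLinearMap.coe_smul',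
      Pi.smul_apply, smul_eq_mul, Real.sqrt_sq (norm_nonneg x)]
    field_simp
    ring
  rw [he] at h2
  exact h2

variable {n : ℕ}

lemma jR_hasFDerivAt (j : ℝ → ℝ) (hj : ContDiff ℝ (⊤ : ℕ∞) j) (R : ℝ)
    (x : EuclideanSpace ℝ (Fin n)) (hx : x ≠ 0) :
    HasFDerivAt (fun y : EuclideanSpace ℝ (Fin n) => j (‖y‖/R))
      ((deriv j (‖x‖/R)) • (R⁻¹ • (‖x‖⁻¹ • innerSL ℝ x))) x := by
  have hg : HasFDerivAt (fun y : EuclideanSpace ℝ (Fin n) => ‖y‖/R)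
      (R⁻¹ • (‖x‖⁻¹ • innerSL ℝ x)) x := by
    simpa [div_eq_inv_mul] using (hasFDerivAt_norm' x hx).const_mul R⁻¹
  have hd : HasDerivAt j (deriv j (‖x‖/R)) (‖x‖/R) :=
    ((hj.differentiable (by simp)) _).hasDerivAt
  exact hd.comp_hasFDerivAt x hg

lemma jR_fderiv_zero (j : ℝ → ℝ) (k R : ℝ) (hR : 0 < R) (hconst : ∀ t ≤ (1:ℝ), j t = k)
    (x : EuclideanSpace ℝ (Fin n)) (hx : ‖x‖ < R) :
    fderiv ℝ (fun y : EuclideanSpace ℝ (Fin n) => j (‖y‖/R)) x = 0 := by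
  have hev : (fun y : EuclideanSpace ℝ (Fin n) => j (‖y‖/R)) =ᶠ[nhds x] (fun _ => k) := by
    have hmem : {y : EuclideanSpace ℝ (Fin n) | ‖y‖ < R} ∈ nhds x := by
      have : IsOpen {y : EuclideanSpace ℝ (Fin n) | ‖y‖ < R} := by
        have : Continuous fun y : EuclideanSpace ℝ (Fin n) => ‖y‖ := continuous_norm
        exact isOpen_lt this continuous_const
      exact this.mem_nhds hx
    filter_upwards [hmem] with y hy
    exact hconst _ (by rw [div_le_one hR]; exact le_of_lt hy)
  rw [hev.fderiv_eq, fderiv_fun_const]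
  rfl

lemma jR_contDiff (j : ℝ → ℝ) (hj : ContDiff ℝ (⊤ : ℕ∞) j) (k R : ℝ) (hR : 0 < R)
    (hconst : ∀ t ≤ (1:ℝ), j t = k) :
    ContDiff ℝ (⊤ : ℕ∞) (fun y : EuclideanSpace ℝ (Fin n) => j (‖y‖/R)) := by
  rw [contDiff_iff_contDiffAt]
  intro x
  rcases lt_or_ge ‖x‖ R with hlt | hge
  · have hev : (fun y : EuclideanSpace ℝ (Fin n) => j (‖y‖/R)) =ᶠ[nhds x] (fun _ => k) := by
      have hmem : {y : EuclideanSpace ℝ (Fin n) | ‖y‖ < R} ∈ nhds x :=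
        (isOpen_lt continuous_norm continuous_const).mem_nhds hlt
      filter_upwards [hmem] with y hy
      exact hconst _ (by rw [div_le_one hR]; exact le_of_lt hy)
    exact (contDiffAt_const (c := k)).congr_of_eventuallyEq hev
  · have hx : x ≠ 0 := by
      intro h
      rw [h, norm_zero] at hge; linarith
    have h1 : ContDiffAt ℝ (⊤ : ℕ∞) (fun y : EuclideanSpace ℝ (Fin n) => ‖y‖/R) x :=
      (contDiffAt_norm ℝ hx).div_const R
    exact hj.contDiffAt.comp x h1

lemma jR_sum_sq_le (j : ℝ → ℝ) (hj : ContDiff ℝ (⊤ : ℕ∞) j) (k R : ℝ) (hR : 0 < R)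
    (hconst : ∀ t ≤ (1:ℝ), j t = k) (C : ℝ) (hC : ∀ t, (deriv j t)^2 ≤ C)
    (x : EuclideanSpace ℝ (Fin n)) :
    ∑ i, (fderiv ℝ (fun y : EuclideanSpace ℝ (Fin n) => j (‖y‖/R)) x
      (EuclideanSpace.single i 1))^2 ≤ C / R^2 := by
  have hC0 : 0 ≤ C := le_trans (sq_nonneg _) (hC 0)
  rcases lt_or_ge ‖x‖ R with hlt | hge
  · rw [jR_fderiv_zero j k R hR hconst x hlt]
    simp only [ContinuousLinearMap.zero_apply]
    have h0 : ∑ i : Fin n, (0:ℝ)^2 = 0 := by simp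
    rw [h0]
    positivity
  · have hx : x ≠ 0 := by intro h; rw [h, norm_zero] at hge; linarith
    have hx0 : ‖x‖ ≠ 0 := norm_ne_zero_iff.mpr hx
    have hfd := (jR_hasFDerivAt j hj R x hx).fderiv
    rw [hfd]
    have happ : ∀ i, ((deriv j (‖x‖/R)) • (R⁻¹ • (‖x‖⁻¹ • innerSL ℝ x)))
        (EuclideanSpace.single i 1) = deriv j (‖x‖/R) * (R⁻¹ * (‖x‖⁻¹ * x i)) := by
      intro i
      simp only [ContinuousLinearMap.smul_apply, smul_eq_mul]
      congr 1
      congr 1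
      congr 1
      have := EuclideanSpace.inner_single_right (𝕜 := ℝ) i (1:ℝ) x
      simpa using this
    simp only [happ]
    have hnx : ∑ i, (x i)^2 = ‖x‖^2 := by
      rw [EuclideanSpace.norm_eq, Real.sq_sqrt (by positivity)]
      congr 1; funext i; rw [Real.norm_eq_abs, sq_abs]
    have : ∑ i, (deriv j (‖x‖/R) * (R⁻¹ * (‖x‖⁻¹ * x i)))^2
        = (deriv j (‖x‖/R))^2 * R⁻¹^2 * ‖x‖⁻¹^2 * ∑ i, (x i)^2 := by
      rw [Finset.mul_sum]; congr 1; funext i; ring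
    rw [this, hnx]
    have heq : (deriv j (‖x‖/R))^2 * R⁻¹^2 * ‖x‖⁻¹^2 * ‖x‖^2 = (deriv j (‖x‖/R))^2 / R^2 := by
      field_simp
    rw [heq]
    apply div_le_div_of_nonneg_right ?_ (by positivity)
    exact hC _

lemma deriv_zero_of_eventually_const (j : ℝ → ℝ) (k : ℝ) {t : ℝ}
    (h : ∀ᶠ s in nhds t, j s = k) : deriv j t = 0 := by
  have : deriv j t = deriv (fun _ : ℝ => k) t := Filter.EventuallyEq.deriv_eq h
  rw [this, deriv_const]

lemma deriv_j₂_eventually_sq_one (j₁ j₂ : ℝ → ℝ) (hj₂ : ContDiff ℝ (⊤ : ℕ∞) j₂)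
    (hsum : ∀ t, j₁ t ^ 2 + j₂ t ^ 2 = 1) (hj₁zero : ∀ t, 2 ≤ t → j₁ t = 0)
    {t : ℝ} (ht : 2 < t) : deriv j₂ t = 0 := by
  have hd : HasDerivAt (fun s => j₂ s ^ 2) (2 * j₂ t ^ 1 * deriv j₂ t) t := by
    have h := ((hj₂.differentiable (by simp)) t).hasDerivAt.pow 2
    exact h.congr_deriv (by norm_num)
  have hev : (fun s => j₂ s ^ 2) =ᶠ[nhds t] (fun _ => (1:ℝ)) := by
    filter_upwards [isOpen_lt continuous_const continuous_id |>.mem_nhds ht] with s hs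
    have h1 : j₁ s = 0 := hj₁zero s (le_of_lt hs)
    have := hsum s
    rw [h1] at this; linarith [this]
  have hd0 : HasDerivAt (fun s => j₂ s ^ 2) 0 t := by
    have := hasDerivAt_const t (1:ℝ)
    exact this.congr_of_eventuallyEq hev
  have huniq : 2 * j₂ t ^ 1 * deriv j₂ t = 0 := hd.unique hd0
  have hne : j₂ t ≠ 0 := by
    have h1 : j₁ t = 0 := hj₁zero t (le_of_lt ht)
    have := hsum t
    rw [h1] at this
    intro h; rw [h] at this; norm_num at this
  have : (2 : ℝ) * j₂ t ≠ 0 := by simp [hne]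
  rcases mul_eq_zero.mp huniq with h | h
  · exact absurd h (by simpa using this)
  · exact h

lemma bddAbove_deriv_sq (j : ℝ → ℝ) (hj : ContDiff ℝ (⊤ : ℕ∞) j)
    (h1 : ∀ t, t < 1 → deriv j t = 0) (h2 : ∀ t, 2 < t → deriv j t = 0) :
    BddAbove (Set.range fun t => (deriv j t)^2) := by
  have hcont : Continuous fun t => (deriv j t)^2 :=
    ((hj.continuous_deriv (mod_cast le_top))).pow 2
  have hsupp : HasCompactSupport fun t => (deriv j t)^2 := by
    apply HasCompactSupport.intro (isCompact_Icc (a := (1:ℝ)) (b := 2))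
    intro t ht
    rw [Set.mem_Icc, not_and_or, not_le, not_le] at ht
    rcases ht with h | h
    · rw [h1 t h]; norm_num
    · rw [h2 t h]; norm_num
  exact hcont.bddAbove_range_of_hasCompactSupport hsupp


lemma cont_fderiv_apply (u : EuclideanSpace ℝ (Fin n) → ℂ) (hu : ContDiff ℝ (⊤ : ℕ∞) u)
    (v : EuclideanSpace ℝ (Fin n)) : Continuous fun x => fderiv ℝ u x v :=
  (ContinuousLinearMap.apply ℝ ℂ v).continuous.comp (hu.continuous_fderiv (by simp))

lemma cont_grad_sq (u : EuclideanSpace ℝ (Fin n) → ℂ) (hu : ContDiff ℝ (⊤ : ℕ∞) u) :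
    Continuous fun x => ∑ i, ‖fderiv ℝ u x (EuclideanSpace.single i 1)‖^2 :=
  continuous_finset_sum _ fun i _ => ((cont_fderiv_apply u hu _).norm).pow 2

lemma hcs_grad_sq (u : EuclideanSpace ℝ (Fin n) → ℂ) (hu : HasCompactSupport u) :
    HasCompactSupport fun x => ∑ i, ‖fderiv ℝ u x (EuclideanSpace.single i 1)‖^2 := by
  have := hu.fderiv (𝕜 := ℝ)
  exact this.comp_left (g := fun L : EuclideanSpace ℝ (Fin n) →L[ℝ] ℂ =>
    ∑ i, ‖L (EuclideanSpace.single i 1)‖^2) (by simp)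

lemma int_grad_sq (u : EuclideanSpace ℝ (Fin n) → ℂ) (hu : ContDiff ℝ (⊤ : ℕ∞) u)
    (hs : HasCompactSupport u) :
    Integrable (fun x => ∑ i, ‖fderiv ℝ u x (EuclideanSpace.single i 1)‖^2) :=
  (cont_grad_sq u hu).integrable_of_hasCompactSupport (hcs_grad_sq u hs)

lemma hcs_norm_sq (u : EuclideanSpace ℝ (Fin n) → ℂ) (hu : HasCompactSupport u) :
    HasCompactSupport fun x => ‖u x‖^2 :=
  hu.comp_left (g := fun z : ℂ => ‖z‖^2) (by simp)

lemma int_norm_sq (u : EuclideanSpace ℝ (Fin n) → ℂ) (hu : Continuous u)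
    (hs : HasCompactSupport u) : Integrable (fun x => ‖u x‖^2) :=
  ((hu.norm).pow 2).integrable_of_hasCompactSupport (hcs_norm_sq u hs)

lemma int_V_norm_sq (V : EuclideanSpace ℝ (Fin n) → ℝ) (hV : Continuous V)
    (u : EuclideanSpace ℝ (Fin n) → ℂ) (hu : Continuous u)
    (hs : HasCompactSupport u) : Integrable (fun x => V x * ‖u x‖^2) :=
  (hV.mul ((hu.norm).pow 2)).integrable_of_hasCompactSupport ((hcs_norm_sq u hs).mul_left)

lemma qform_eq (V : EuclideanSpace ℝ (Fin n) → ℝ) (u : EuclideanSpace ℝ (Fin n) → ℂ) :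
    qform V u = ∫ x, ((∑ i, ‖fderiv ℝ u x (EuclideanSpace.single i 1)‖^2) + V x * ‖u x‖^2) := by
  unfold qform
  congr 1
  funext x
  rw [gradC_norm_sq]

lemma qform_split (V : EuclideanSpace ℝ (Fin n) → ℝ) (hV : Continuous V)
    (u : EuclideanSpace ℝ (Fin n) → ℂ) (hu : ContDiff ℝ (⊤ : ℕ∞) u)
    (hs : HasCompactSupport u) :
    qform V u = (∫ x, ∑ i, ‖fderiv ℝ u x (EuclideanSpace.single i 1)‖^2)
      + ∫ x, V x * ‖u x‖^2 := by
  rw [qform_eq]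
  exact integral_add (int_grad_sq u hu hs) (int_V_norm_sq V hV u hu.continuous hs)

lemma qform_zero (V : EuclideanSpace ℝ (Fin n) → ℝ) : qform V (fun _ => (0:ℂ)) = 0 := by
  rw [qform_eq]
  have : ∀ x : EuclideanSpace ℝ (Fin n),
      ((∑ i, ‖fderiv ℝ (fun _ : EuclideanSpace ℝ (Fin n) => (0:ℂ)) x
        (EuclideanSpace.single i 1)‖^2) + V x * ‖(0:ℂ)‖^2) = 0 := by
    intro x
    simp [fderiv_const_apply]
  simp only [this, integral_zero]

lemma qform_smul (V : EuclideanSpace ℝ (Fin n) → ℝ) (u : EuclideanSpace ℝ (Fin n) → ℂ)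
    (hu : ContDiff ℝ (⊤ : ℕ∞) u) (s : ℝ) :
    qform V (fun x => (s:ℂ) * u x) = s^2 * qform V u := by
  rw [qform_eq, qform_eq, ← integral_const_mul]
  congr 1
  funext x
  have hfd : ∀ v, fderiv ℝ (fun y => (s:ℂ) * u y) x v = (s:ℂ) * fderiv ℝ u x v := by
    intro v
    rw [fderiv_const_mul ((hu.differentiable (by simp)) x) ((s:ℂ))]
    simp
  simp only [hfd]
  have hnr : ∀ w : ℂ, ‖(s:ℂ) * w‖^2 = s^2 * ‖w‖^2 := by
    intro w
    rw [norm_mul, Complex.norm_real, mul_pow, Real.norm_eq_abs, sq_abs]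
  simp only [hnr]
  rw [← Finset.mul_sum]
  ring

lemma nsq_smul (u : EuclideanSpace ℝ (Fin n) → ℂ) (s : ℝ) :
    (∫ x, ‖(s:ℂ) * u x‖^2) = s^2 * ∫ x, ‖u x‖^2 := by
  rw [← integral_const_mul]
  congr 1
  funext x
  rw [norm_mul, Complex.norm_real, mul_pow, Real.norm_eq_abs, sq_abs]

lemma eq_zero_of_integral_nsq_zero (u : EuclideanSpace ℝ (Fin n) → ℂ)
    (hu : Continuous u) (hs : HasCompactSupport u) (h : (∫ x, ‖u x‖^2) = 0) :
    ∀ x, u x = 0 := by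
  have hi := int_norm_sq u hu hs
  rw [integral_eq_zero_iff_of_nonneg (fun x => sq_nonneg _) hi] at h
  have hcont : Continuous fun x => ‖u x‖^2 := (hu.norm).pow 2
  have := (hcont.ae_eq_iff_eq (volume) (continuous_const (y := (0:ℝ)))).mp h
  intro x
  have hx := congrFun this x
  simpa using hx

lemma sInf_nsq_le_qform (V : EuclideanSpace ℝ (Fin n) → ℝ)
    (S : Set ℝ) (hbddS : BddBelow S) (u : EuclideanSpace ℝ (Fin n) → ℂ)
    (hu : ContDiff ℝ (⊤ : ℕ∞) u) (hs : HasCompactSupport u)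
    (hmem : ∀ w : EuclideanSpace ℝ (Fin n) → ℂ, ContDiff ℝ (⊤ : ℕ∞) w →
      HasCompactSupport w → (∫ x, ‖w x‖^2) = 1 → (∀ x, u x = 0 → w x = 0) →
      qform V w ∈ S) :
    sInf S * (∫ x, ‖u x‖^2) ≤ qform V u := by
  have hN0 : 0 ≤ ∫ x, ‖u x‖^2 := integral_nonneg fun x => sq_nonneg _
  rcases eq_or_lt_of_le hN0 with hN | hN
  · have hz := eq_zero_of_integral_nsq_zero u hu.continuous hs hN.symm
    have hq0 : qform V u = 0 := by rw [funext hz]; exact qform_zero V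
    rw [hq0, ← hN, mul_zero]
  · set N := ∫ x, ‖u x‖^2 with hNdef
    set s : ℝ := (Real.sqrt N)⁻¹ with hsdef
    have hsN : Real.sqrt N > 0 := Real.sqrt_pos.mpr hN
    have hs2 : s^2 = N⁻¹ := by
      rw [hsdef, inv_pow, Real.sq_sqrt hN.le]
    set w : EuclideanSpace ℝ (Fin n) → ℂ := fun x => (s:ℂ) * u x with hwdef
    have hw1 : ContDiff ℝ (⊤ : ℕ∞) w := contDiff_const.mul hu
    have hw2 : HasCompactSupport w := hs.mul_left
    have hw3 : (∫ x, ‖w x‖^2) = 1 := by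
      rw [hwdef]
      rw [nsq_smul u s, hs2, ← hNdef]
      field_simp
    have hw4 : ∀ x, u x = 0 → w x = 0 := by
      intro x hx; rw [hwdef]; simp [hx]
    have hmem' := hmem w hw1 hw2 hw3 hw4
    have hle := csInf_le hbddS hmem'
    have hq : qform V w = s^2 * qform V u := qform_smul V u hu s
    rw [hq, hs2] at hle
    calc sInf S * N ≤ (N⁻¹ * qform V u) * N := by
          apply mul_le_mul_of_nonneg_right hle (le_of_lt hN)
      _ = qform V u := by field_simp

lemma deriv_zero_of_const_le {j : ℝ → ℝ} {k : ℝ} (hconst : ∀ s ≤ (1:ℝ), j s = k)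
    {t : ℝ} (ht : t < 1) : deriv j t = 0 := by
  apply deriv_zero_of_eventually_const j k
  filter_upwards [Iio_mem_nhds ht] with s hs
  exact hconst s (le_of_lt hs)

lemma deriv_zero_of_const_ge {j : ℝ → ℝ} {k : ℝ} (hconst : ∀ s, 2 ≤ s → j s = k)
    {t : ℝ} (ht : 2 < t) : deriv j t = 0 := by
  apply deriv_zero_of_eventually_const j k
  filter_upwards [Ioi_mem_nhds ht] with s hs
  exact hconst s (le_of_lt hs)

lemma fderiv_coe_mul (g : EuclideanSpace ℝ (Fin n) → ℝ) (u : EuclideanSpace ℝ (Fin n) → ℂ)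
    (x : EuclideanSpace ℝ (Fin n)) (hg : DifferentiableAt ℝ g x) (hu : DifferentiableAt ℝ u x)
    (v : EuclideanSpace ℝ (Fin n)) :
    fderiv ℝ (fun y => (g y : ℂ) * u y) x v
      = ((fderiv ℝ g x v : ℝ) : ℂ) * u x + (g x : ℂ) * fderiv ℝ u x v := by
  have hgc : HasFDerivAt (fun y => ((g y : ℝ) : ℂ)) (Complex.ofRealCLM.comp (fderiv ℝ g x)) x :=
    Complex.ofRealCLM.hasFDerivAt.comp x hg.hasFDerivAt
  have h := hgc.mul hu.hasFDerivAt
  rw [show (fun y => (g y : ℂ) * u y) = (fun y => ((g y : ℝ) : ℂ)) * u from rfl, h.fderiv]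
  simp only [ContinuousLinearMap.add_apply, ContinuousLinearMap.coe_smul', Pi.smul_apply,
    ContinuousLinearMap.coe_comp', Function.comp_apply, Complex.ofRealCLM_apply,
    smul_eq_mul]
  ring
/-- IMS lower bound `H + (Σ_R − E)χ_{2R} ≥ Σ_R − c/R²` (quadratic form version
of equation (2.2) of the paper). -/
theorem IMS_lower_bound {n : ℕ} (hn : 1 ≤ n)
    (V : EuclideanSpace ℝ (Fin n) → ℝ) (hV : Continuous V)
    (E : ℝ) (hE : E = sInf (energySet V)) (hbdd : BddBelow (energySet V))
    (SigR : ℝ → ℝ) (hSigR : ∀ R, SigR R = sInf (energySetOutside V R))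
    (j₁ j₂ : ℝ → ℝ) (hj₁ : ContDiff ℝ (⊤ : ℕ∞) j₁) (hj₂ : ContDiff ℝ (⊤ : ℕ∞) j₂)
    (hsum : ∀ t, j₁ t ^ 2 + j₂ t ^ 2 = 1)
    (hj₁one : ∀ t ≤ (1 : ℝ), j₁ t = 1) (hj₁zero : ∀ t, 2 ≤ t → j₁ t = 0)
    (hj₂zero : ∀ t ≤ (1 : ℝ), j₂ t = 0)
    (c : ℝ) (hc : c = (⨆ t, (deriv j₁ t) ^ 2) + ⨆ t, (deriv j₂ t) ^ 2)
    (R : ℝ) (hR : 0 < R) (hSigRE : E ≤ SigR R)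
    (φ : EuclideanSpace ℝ (Fin n) → ℂ) (hφ : ContDiff ℝ (⊤ : ℕ∞) φ)
    (hφsupp : HasCompactSupport φ) (hφnorm : (∫ x, ‖φ x‖ ^ 2) = 1) :
    SigR R - c / R ^ 2
      ≤ qform V φ + (SigR R - E) * ∫ x in {x : EuclideanSpace ℝ (Fin n) | ‖x‖ ≤ 2 * R}, ‖φ x‖ ^ 2 := by
  set j1R : EuclideanSpace ℝ (Fin n) → ℝ := fun y => j₁ (‖y‖ / R) with hj1Rdef
  set j2R : EuclideanSpace ℝ (Fin n) → ℝ := fun y => j₂ (‖y‖ / R) with hj2Rdef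
  set ψ₁ : EuclideanSpace ℝ (Fin n) → ℂ := fun y => (j1R y : ℂ) * φ y with hψ₁def
  set ψ₂ : EuclideanSpace ℝ (Fin n) → ℂ := fun y => (j2R y : ℂ) * φ y with hψ₂def
  have hsm1 : ContDiff ℝ (⊤ : ℕ∞) j1R := jR_contDiff j₁ hj₁ 1 R hR hj₁one
  have hsm2 : ContDiff ℝ (⊤ : ℕ∞) j2R := jR_contDiff j₂ hj₂ 0 R hR hj₂zero
  have hψ₁sm : ContDiff ℝ (⊤ : ℕ∞) ψ₁ :=
    (Complex.ofRealCLM.contDiff.comp hsm1).mul hφ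
  have hψ₂sm : ContDiff ℝ (⊤ : ℕ∞) ψ₂ :=
    (Complex.ofRealCLM.contDiff.comp hsm2).mul hφ
  have hψ₁cs : HasCompactSupport ψ₁ := hφsupp.mul_left
  have hψ₂cs : HasCompactSupport ψ₂ := hφsupp.mul_left
  -- bounds on the derivatives of j₁, j₂
  have hd₁lt : ∀ t, t < 1 → deriv j₁ t = 0 := fun t ht => deriv_zero_of_const_le hj₁one ht
  have hd₁gt : ∀ t, 2 < t → deriv j₁ t = 0 := fun t ht => deriv_zero_of_const_ge hj₁zero ht
  have hd₂lt : ∀ t, t < 1 → deriv j₂ t = 0 := fun t ht => deriv_zero_of_const_le hj₂zero ht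
  have hd₂gt : ∀ t, 2 < t → deriv j₂ t = 0 := fun t ht =>
    deriv_j₂_eventually_sq_one j₁ j₂ hj₂ hsum hj₁zero ht
  have hb₁ : BddAbove (Set.range fun t => (deriv j₁ t)^2) :=
    bddAbove_deriv_sq j₁ hj₁ hd₁lt hd₁gt
  have hb₂ : BddAbove (Set.range fun t => (deriv j₂ t)^2) :=
    bddAbove_deriv_sq j₂ hj₂ hd₂lt hd₂gt
  set C₁ : ℝ := ⨆ t, (deriv j₁ t)^2 with hC₁def
  set C₂ : ℝ := ⨆ t, (deriv j₂ t)^2 with hC₂def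
  have hC₁ : ∀ t, (deriv j₁ t)^2 ≤ C₁ := fun t => le_ciSup hb₁ t
  have hC₂ : ∀ t, (deriv j₂ t)^2 ≤ C₂ := fun t => le_ciSup hb₂ t
  have hcC : c = C₁ + C₂ := hc
  -- the pointwise IMS inequality
  have hgrad : ∀ x, (∑ i, ‖fderiv ℝ ψ₁ x (EuclideanSpace.single i 1)‖^2)
      + (∑ i, ‖fderiv ℝ ψ₂ x (EuclideanSpace.single i 1)‖^2)
      ≤ (∑ i, ‖fderiv ℝ φ x (EuclideanSpace.single i 1)‖^2) + (c/R^2) * ‖φ x‖^2 := by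
    intro x
    have hdA : DifferentiableAt ℝ j1R x := (hsm1.differentiable (by simp)) x
    have hdB : DifferentiableAt ℝ j2R x := (hsm2.differentiable (by simp)) x
    have hdφ : DifferentiableAt ℝ φ x := (hφ.differentiable (by simp)) x
    have hrel : ∀ v, j1R x * (fderiv ℝ j1R x v) + j2R x * (fderiv ℝ j2R x v) = 0 := by
      intro v
      have h1 : HasFDerivAt (fun y => j1R y * j1R y + j2R y * j2R y)
          ((j1R x • fderiv ℝ j1R x + j1R x • fderiv ℝ j1R x) +
           (j2R x • fderiv ℝ j2R x + j2R x • fderiv ℝ j2R x)) x :=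
        (hdA.hasFDerivAt.mul hdA.hasFDerivAt).add (hdB.hasFDerivAt.mul hdB.hasFDerivAt)
      have heq : (fun y : EuclideanSpace ℝ (Fin n) => j1R y * j1R y + j2R y * j2R y)
          = fun _ => (1:ℝ) := by
        funext y
        have := hsum (‖y‖/R)
        simp only [hj1Rdef, hj2Rdef]
        nlinarith [this]
      have h2 : HasFDerivAt (fun y : EuclideanSpace ℝ (Fin n) => j1R y * j1R y + j2R y * j2R y)
          (0 : EuclideanSpace ℝ (Fin n) →L[ℝ] ℝ) x := by
        rw [heq]; exact hasFDerivAt_const 1 x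
      have h0 := h1.unique h2
      have h3 := congrArg (fun L : EuclideanSpace ℝ (Fin n) →L[ℝ] ℝ => L v) h0
      simp only [ContinuousLinearMap.add_apply, ContinuousLinearMap.coe_smul',
        Pi.smul_apply, smul_eq_mul, ContinuousLinearMap.zero_apply] at h3
      linarith
    have hcomp1 : ∀ i : Fin n, fderiv ℝ ψ₁ x (EuclideanSpace.single i 1)
        = ((fderiv ℝ j1R x (EuclideanSpace.single i 1) : ℝ) : ℂ) * φ x
          + (j1R x : ℂ) * fderiv ℝ φ x (EuclideanSpace.single i 1) := fun i =>
      fderiv_coe_mul j1R φ x hdA hdφ _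
    have hcomp2 : ∀ i : Fin n, fderiv ℝ ψ₂ x (EuclideanSpace.single i 1)
        = ((fderiv ℝ j2R x (EuclideanSpace.single i 1) : ℝ) : ℂ) * φ x
          + (j2R x : ℂ) * fderiv ℝ φ x (EuclideanSpace.single i 1) := fun i =>
      fderiv_coe_mul j2R φ x hdB hdφ _
    have hkey : ∀ i : Fin n, ‖fderiv ℝ ψ₁ x (EuclideanSpace.single i 1)‖^2
        + ‖fderiv ℝ ψ₂ x (EuclideanSpace.single i 1)‖^2
        = ‖fderiv ℝ φ x (EuclideanSpace.single i 1)‖^2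
          + ((fderiv ℝ j1R x (EuclideanSpace.single i 1))^2
            + (fderiv ℝ j2R x (EuclideanSpace.single i 1))^2) * ‖φ x‖^2 := by
      intro i
      rw [hcomp1 i, hcomp2 i]
      exact complex_key (j1R x) (j2R x) _ _ (φ x) _ (hsum (‖x‖/R)) (hrel _)
    have hsum1 : ∑ i, (fderiv ℝ j1R x (EuclideanSpace.single i 1))^2 ≤ C₁ / R^2 :=
      jR_sum_sq_le j₁ hj₁ 1 R hR hj₁one C₁ hC₁ x
    have hsum2 : ∑ i, (fderiv ℝ j2R x (EuclideanSpace.single i 1))^2 ≤ C₂ / R^2 :=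
      jR_sum_sq_le j₂ hj₂ 0 R hR hj₂zero C₂ hC₂ x
    calc (∑ i, ‖fderiv ℝ ψ₁ x (EuclideanSpace.single i 1)‖^2)
        + (∑ i, ‖fderiv ℝ ψ₂ x (EuclideanSpace.single i 1)‖^2)
        = ∑ i, (‖fderiv ℝ ψ₁ x (EuclideanSpace.single i 1)‖^2
            + ‖fderiv ℝ ψ₂ x (EuclideanSpace.single i 1)‖^2) := by
          rw [Finset.sum_add_distrib]
      _ = (∑ i, ‖fderiv ℝ φ x (EuclideanSpace.single i 1)‖^2)
          + ((∑ i, (fderiv ℝ j1R x (EuclideanSpace.single i 1))^2)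
            + (∑ i, (fderiv ℝ j2R x (EuclideanSpace.single i 1))^2)) * ‖φ x‖^2 := by
          simp only [hkey]
          rw [Finset.sum_add_distrib, ← Finset.sum_mul, Finset.sum_add_distrib]
      _ ≤ (∑ i, ‖fderiv ℝ φ x (EuclideanSpace.single i 1)‖^2) + (c/R^2) * ‖φ x‖^2 := by
          apply add_le_add le_rfl
          apply mul_le_mul_of_nonneg_right ?_ (sq_nonneg _)
          rw [hcC, add_div]
          exact add_le_add hsum1 hsum2
  -- pointwise mass identity
  have hmass : ∀ x, ‖ψ₁ x‖^2 + ‖ψ₂ x‖^2 = ‖φ x‖^2 := by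
    intro x
    simp only [hψ₁def, hψ₂def]
    rw [norm_mul, norm_mul, Complex.norm_real, Complex.norm_real, mul_pow, mul_pow,
      Real.norm_eq_abs, Real.norm_eq_abs, sq_abs, sq_abs, ← add_mul]
    rw [show j1R x ^ 2 + j2R x ^ 2 = 1 from hsum (‖x‖/R), one_mul]
  -- integrability facts
  have hintφn := int_norm_sq φ hφ.continuous hφsupp
  have hint1n := int_norm_sq ψ₁ hψ₁sm.continuous hψ₁cs
  have hint2n := int_norm_sq ψ₂ hψ₂sm.continuous hψ₂cs
  set A : ℝ := ∫ x, ‖ψ₁ x‖^2 with hAdef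
  set B : ℝ := ∫ x, ‖ψ₂ x‖^2 with hBdef
  have hAB : A + B = 1 := by
    rw [hAdef, hBdef, ← integral_add hint1n hint2n, ← hφnorm]
    congr 1; funext x; exact hmass x
  have hA0 : 0 ≤ A := integral_nonneg fun x => sq_nonneg _
  -- the IMS localization estimate for the quadratic forms
  have hq12 : qform V ψ₁ + qform V ψ₂ ≤ qform V φ + c/R^2 := by
    have hint1 := int_grad_sq ψ₁ hψ₁sm hψ₁cs
    have hint2 := int_grad_sq ψ₂ hψ₂sm hψ₂cs
    have hintφ := int_grad_sq φ hφ hφsupp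
    have hgradint : (∫ x, ∑ i, ‖fderiv ℝ ψ₁ x (EuclideanSpace.single i 1)‖^2)
        + (∫ x, ∑ i, ‖fderiv ℝ ψ₂ x (EuclideanSpace.single i 1)‖^2)
        ≤ (∫ x, ∑ i, ‖fderiv ℝ φ x (EuclideanSpace.single i 1)‖^2) + c/R^2 := by
      rw [← integral_add hint1 hint2]
      have hrhs : (∫ x, ∑ i, ‖fderiv ℝ φ x (EuclideanSpace.single i 1)‖^2) + c/R^2
          = ∫ x, ((∑ i, ‖fderiv ℝ φ x (EuclideanSpace.single i 1)‖^2)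
            + (c/R^2) * ‖φ x‖^2) := by
        rw [integral_add hintφ (hintφn.const_mul _), integral_const_mul, hφnorm, mul_one]
      rw [hrhs]
      exact integral_mono (hint1.add hint2) (hintφ.add (hintφn.const_mul _)) hgrad
    have hVint : (∫ x, V x * ‖ψ₁ x‖^2) + (∫ x, V x * ‖ψ₂ x‖^2) = ∫ x, V x * ‖φ x‖^2 := by
      rw [← integral_add (int_V_norm_sq V hV ψ₁ hψ₁sm.continuous hψ₁cs)
        (int_V_norm_sq V hV ψ₂ hψ₂sm.continuous hψ₂cs)]
      congr 1; funext x
      rw [← mul_add, hmass x]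
    rw [qform_split V hV ψ₁ hψ₁sm hψ₁cs, qform_split V hV ψ₂ hψ₂sm hψ₂cs,
      qform_split V hV φ hφ hφsupp]
    linarith
  -- lower bounds from the infima
  have hE1 : E * A ≤ qform V ψ₁ := by
    rw [hE]
    exact sInf_nsq_le_qform V (energySet V) hbdd ψ₁ hψ₁sm hψ₁cs
      (fun w h1 h2 h3 _ => ⟨w, h1, h2, h3, rfl⟩)
  have hsubset : energySetOutside V R ⊆ energySet V := by
    rintro e ⟨w, h1, h2, h3, _, h5⟩
    exact ⟨w, h1, h2, h3, h5⟩
  have hS2 : SigR R * B ≤ qform V ψ₂ := by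
    rw [hSigR R]
    apply sInf_nsq_le_qform V (energySetOutside V R) (hbdd.mono hsubset) ψ₂ hψ₂sm hψ₂cs
    intro w h1 h2 h3 h4
    refine ⟨w, h1, h2, h3, fun x hx => h4 x ?_, rfl⟩
    have : j2R x = 0 := hj₂zero _ (le_of_lt ((div_lt_one hR).mpr hx))
    simp [hψ₂def, this]
  -- comparison with the indicator of the ball of radius 2R
  set S2R : Set (EuclideanSpace ℝ (Fin n)) := {x | ‖x‖ ≤ 2 * R} with hS2Rdef
  have hmeas : MeasurableSet S2R := (isClosed_le continuous_norm continuous_const).measurableSet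
  have hA2R : A ≤ ∫ x in S2R, ‖φ x‖^2 := by
    have hApt : A = ∫ x, (j1R x)^2 * ‖φ x‖^2 := by
      rw [hAdef]
      congr 1; funext x
      rw [hψ₁def]
      rw [norm_mul, Complex.norm_real, mul_pow, Real.norm_eq_abs, sq_abs]
    have hf_int : Integrable (fun x => (j1R x)^2 * ‖φ x‖^2) :=
      ((hsm1.continuous.pow 2).mul ((hφ.continuous.norm).pow 2)).integrable_of_hasCompactSupport
        ((hcs_norm_sq φ hφsupp).mul_left)
    have hstep1 : ∫ x in S2R, (j1R x)^2 * ‖φ x‖^2 = ∫ x, (j1R x)^2 * ‖φ x‖^2 := by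
      apply setIntegral_eq_integral_of_forall_compl_eq_zero
      intro x hx
      have h2R : 2 * R < ‖x‖ := lt_of_not_ge hx
      have : j1R x = 0 := by
        apply hj₁zero
        rw [le_div_iff₀ hR]
        linarith
      rw [this]
      ring
    have hstep2 : ∫ x in S2R, (j1R x)^2 * ‖φ x‖^2 ≤ ∫ x in S2R, ‖φ x‖^2 := by
      apply setIntegral_mono_on hf_int.integrableOn hintφn.integrableOn hmeas
      intro x _
      nlinarith [hsum (‖x‖/R), sq_nonneg (j₂ (‖x‖/R)), sq_nonneg ‖φ x‖, sq_nonneg (j₁ (‖x‖/R) * ‖φ x‖)]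
    rw [hApt, ← hstep1]
    exact hstep2
  -- putting everything together
  have hmul : (SigR R - E) * A ≤ (SigR R - E) * ∫ x in S2R, ‖φ x‖^2 :=
    mul_le_mul_of_nonneg_left hA2R (by linarith)
  have hSAB : SigR R * A + SigR R * B = SigR R := by
    rw [← mul_add, hAB, mul_one]
  rw [sub_mul] at hmul
  rw [sub_mul] at hmul ⊢
  linarith
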